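/- Let f(x) = 1/(x-1)^2 over a field k of characteristic 0 and let K_∞ be the union of the splitting fields K_n of f^n(x) - t over K = k(t). Then for every m ≥ 1, K_∞ contains a primitive 2^m-th root of unity; moreover ζ_{2^m} ∈ K_{2m-1}. -/

import Mathlib

open Polynomial

/-- The numerators and denominators of the iterates of `f(x) = 1/(x-1)²` over `k`:
`gh k n = (gₙ, hₙ)` with `g₁ = 1`, `h₁ = (x-1)²`, `gₙ = hₙ₋₁²`, `hₙ = (gₙ₋₁ - hₙ₋₁)²`. -/
noncomputable def gh (k : Type*) [Field k] : ℕ → Polynomial k × Polynomial k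
  | 0 => (1, 1)
  | 1 => (1, (X - 1) ^ 2)
  | n + 2 => ((gh k (n + 1)).2 ^ 2, ((gh k (n + 1)).1 - (gh k (n + 1)).2) ^ 2)

/-- The polynomial `gₙ(x) - t·hₙ(x)` over `K = k(t)`, whose splitting field is `Kₙ`. -/
noncomputable def P (k : Type*) [Field k] (n : ℕ) : Polynomial (RatFunc k) :=
  ((gh k n).1).map (RatFunc.C : k →+* RatFunc k) -
    C RatFunc.X * ((gh k n).2).map (RatFunc.C : k →+* RatFunc k)

set_option linter.unusedSectionVars false

namespace St19

variable {k : Type} [Field k] [CharZero k] {L : Type*} [Field L]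

/-- `Q φ j β = gⱼ - β·hⱼ` mapped into `L`. -/
noncomputable def Q (φ : k →+* L) (j : ℕ) (β : L) : Polynomial L :=
  ((gh k j).1).map φ - C β * ((gh k j).2).map φ

/-- `∀ a, φ a ≠ β` : "β is not in the base field". -/
def NR (φ : k →+* L) (β : L) : Prop := ∀ a : k, φ a ≠ β

lemma NR.ne_zero {φ : k →+* L} {β : L} (h : NR φ β) : β ≠ 0 :=
  fun e => h 0 (by simp [e])

lemma gh_coprime (j : ℕ) : IsCoprime (gh k (j+1)).1 (gh k (j+1)).2 := by
  induction j with
  | zero => simpa [gh] using (isCoprime_one_left : IsCoprime (1:k[X]) (((X : k[X]) - 1)^2))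
  | succ n ih =>
    have h1 : IsCoprime (gh k (n+1)).2 ((gh k (n+1)).1 - (gh k (n+1)).2) := by
      simpa [mul_neg_one, ← sub_eq_add_neg] using ih.symm.add_mul_left_right (-1)
    simpa [gh] using h1.pow

lemma gh_evals (j : ℕ) :
    (eval 1 (gh k (j+1)).1 = 1 ∧ eval 1 (gh k (j+1)).2 = 0 ∧
      eval 0 (gh k (j+1)).1 = 1 ∧ eval 0 (gh k (j+1)).2 = 1) ∨
    (eval 1 (gh k (j+1)).1 = 0 ∧ eval 1 (gh k (j+1)).2 = 1 ∧
      eval 0 (gh k (j+1)).1 = 1 ∧ eval 0 (gh k (j+1)).2 = 0) ∨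
    (eval 1 (gh k (j+1)).1 = 1 ∧ eval 1 (gh k (j+1)).2 = 1 ∧
      eval 0 (gh k (j+1)).1 = 0 ∧ eval 0 (gh k (j+1)).2 = 1) := by
  induction j with
  | zero => left; simp [gh]
  | succ n ih =>
    rcases ih with ⟨a,b,c,d⟩|⟨a,b,c,d⟩|⟨a,b,c,d⟩
    · right; left; simp [gh, a, b, c, d]
    · right; right; simp [gh, a, b, c, d]
    · left; simp [gh, a, b, c, d]

lemma exists_coeff_ne {p : k[X]} (h : eval 1 p ≠ eval 0 p) : ∃ i, i ≠ 0 ∧ p.coeff i ≠ 0 := by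
  by_contra hc
  push_neg at hc
  have hp : p = C (p.coeff 0) := by
    ext n
    cases n with
    | zero => simp
    | succ n => simp [hc (n+1) (Nat.succ_ne_zero n)]
  rw [hp] at h
  simp at h

lemma Q_coeff (φ : k →+* L) (j : ℕ) (β : L) (i : ℕ) :
    (Q φ j β).coeff i = φ ((gh k j).1.coeff i) - β * φ ((gh k j).2.coeff i) := by
  simp [Q, coeff_map, coeff_C_mul]

lemma Q_exists (φ : k →+* L) (j : ℕ) (β : L) (hβ : NR φ β) :
    ∃ i, i ≠ 0 ∧ (Q φ (j+1) β).coeff i ≠ 0 := by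
  have hw : ∃ i, i ≠ 0 ∧ ((gh k (j+1)).1.coeff i ≠ 0 ∨ (gh k (j+1)).2.coeff i ≠ 0) := by
    rcases gh_evals (k := k) j with ⟨a,b,c,d⟩|⟨a,b,c,d⟩|⟨a,b,c,d⟩
    · obtain ⟨i, hi, hne⟩ := exists_coeff_ne (p := (gh k (j+1)).2) (by rw [b, d]; norm_num)
      exact ⟨i, hi, Or.inr hne⟩
    · obtain ⟨i, hi, hne⟩ := exists_coeff_ne (p := (gh k (j+1)).1) (by rw [a, c]; norm_num)
      exact ⟨i, hi, Or.inl hne⟩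
    · obtain ⟨i, hi, hne⟩ := exists_coeff_ne (p := (gh k (j+1)).1) (by rw [a, c]; norm_num)
      exact ⟨i, hi, Or.inl hne⟩
  obtain ⟨i, hi0, hgh⟩ := hw
  refine ⟨i, hi0, fun hQ => ?_⟩
  rw [Q_coeff] at hQ
  have heq : φ ((gh k (j+1)).1.coeff i) = β * φ ((gh k (j+1)).2.coeff i) := by
    linear_combination hQ
  have hh : (gh k (j+1)).2.coeff i ≠ 0 := by
    rcases hgh with hg | hh
    · intro h0
      rw [h0, map_zero, mul_zero] at heq
      exact hg (by simpa using φ.injective (by simpa using heq))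
    · exact hh
  have hφh : φ ((gh k (j+1)).2.coeff i) ≠ 0 := fun h0 => hh (by simpa using φ.injective (by simpa using h0))
  apply hβ ((gh k (j+1)).1.coeff i / (gh k (j+1)).2.coeff i)
  rw [map_div₀, heq, mul_div_assoc, div_self hφh, mul_one]

lemma Q_ne (φ : k →+* L) (j : ℕ) (β : L) (hβ : NR φ β) : Q φ (j+1) β ≠ 0 := by
  obtain ⟨i, _, hc⟩ := Q_exists φ j β hβ
  intro h
  rw [h] at hc
  simp at hc

lemma Q_deg (φ : k →+* L) (j : ℕ) (β : L) (hβ : NR φ β) : (Q φ (j+1) β).degree ≠ 0 := by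
  obtain ⟨i, hi, hc⟩ := Q_exists φ j β hβ
  intro hd
  have hnd : (Q φ (j+1) β).natDegree = 0 := natDegree_eq_zero_iff_degree_le_zero.mpr (le_of_eq hd)
  exact hc (coeff_eq_zero_of_natDegree_lt (by omega))

/-- A "node" of the preimage tree: `β` transcendental over `k` and `Q j β` splits in `L`. -/
def Nd (φ : k →+* L) (j : ℕ) (β : L) : Prop :=
  NR φ β ∧ (Q φ j β).Splits

lemma Q_fact (φ : k →+* L) (j : ℕ) {β u : L} (hu : u^2 * β = 1) :
    Q φ (j+2) β = C (-β) * (Q φ (j+1) (1+u) * Q φ (j+1) (1-u)) := by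
  have hC : (C u : L[X])^2 * C β = 1 := by rw [← C_pow, ← C_mul, hu, C_1]
  simp only [Q, gh, Polynomial.map_pow, Polynomial.map_sub, C_add, C_sub, C_neg, C_1]
  linear_combination (-((((gh k (j+1)).2).map φ))^2) * hC

lemma step (φ : k →+* L) (j : ℕ) {β : L} (h : Nd φ (j+1) β) :
    ∃ u : L, u^2 * β = 1 ∧ (1 ≤ j → Nd φ j (1+u) ∧ Nd φ j (1-u)) := by
  obtain ⟨hNR, hsp⟩ := h
  obtain ⟨γ, hγ⟩ := hsp.exists_eval_eq_zero (Q_deg φ j β hNR)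
  cases j with
  | zero =>
    simp only [Q, gh, Polynomial.map_pow, Polynomial.map_sub, Polynomial.map_one, map_X,
      eval_sub, eval_mul, eval_C, eval_pow, eval_one, eval_X] at hγ
    exact ⟨γ - 1, by linear_combination -hγ, fun h10 => absurd h10 (by omega)⟩
  | succ j' =>
    simp only [Q, gh, Polynomial.map_pow, Polynomial.map_sub, eval_sub, eval_mul, eval_C,
      eval_pow] at hγ
    set G := eval γ (((gh k (j'+1)).1).map φ) with hGdef
    set A := eval γ (((gh k (j'+1)).2).map φ) with hAdef
    -- hγ : A^2 - β * (G - A)^2 = 0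
    have hβ0 : β ≠ 0 := hNR.ne_zero
    have hA : A ≠ 0 := by
      intro hA0
      have hGA : (G - A)^2 = 0 := by
        have : β * (G - A)^2 = 0 := by linear_combination -hγ + hA0 * (A + 0)
        exact (mul_eq_zero.mp this).resolve_left hβ0
      have hG : G = 0 := by
        have h2 := pow_eq_zero_iff (n := 2) (by omega) |>.mp hGA
        linear_combination h2 + hA0
      obtain ⟨a, b, hab⟩ := gh_coprime (k := k) j'
      have hone := congrArg (fun p => eval γ (p.map φ)) hab
      simp only [Polynomial.map_add, Polynomial.map_mul, Polynomial.map_one, eval_add, eval_mul,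
        eval_one, ← hGdef, ← hAdef, hG, hA0, mul_zero, add_zero, zero_add] at hone
      exact one_ne_zero hone.symm
    refine ⟨(G - A)/A, ?_, ?_⟩
    · field_simp
      linear_combination -hγ
    · intro _
      set u := (G - A)/A with hudef
      have hu : u^2 * β = 1 := by rw [hudef]; field_simp; linear_combination -hγ
      have hu0 : u ≠ 0 := by
        intro h0
        rw [h0] at hu
        simp at hu
      have hNR1 : NR φ (1+u) := by
        intro a ha
        have hu' : u = φ (a - 1) := by rw [map_sub, map_one, ha]; ring
        have ha1 : a - 1 ≠ 0 := by
          intro h0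
          rw [h0, map_zero] at hu'
          exact hu0 hu'
        apply hNR (((a-1)⁻¹)^2)
        rw [map_pow, map_inv₀, ← hu', inv_pow]
        exact inv_eq_of_mul_eq_one_right hu
      have hNR2 : NR φ (1-u) := by
        intro a ha
        have hu' : u = φ (1 - a) := by rw [map_sub, map_one, ha]; ring
        have ha1 : (1:k) - a ≠ 0 := by
          intro h0
          rw [h0, map_zero] at hu'
          exact hu0 hu'
        apply hNR (((1-a)⁻¹)^2)
        rw [map_pow, map_inv₀, ← hu', inv_pow]
        exact inv_eq_of_mul_eq_one_right hu
      have hfact := Q_fact φ j' hu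
      have hQne : Q φ (j'+1+1) β ≠ 0 := Q_ne φ (j'+1) β hNR
      constructor
      · refine ⟨hNR1, hsp.of_dvd hQne ?_⟩
        exact ⟨C (-β) * Q φ (j'+1) (1-u), by rw [hfact]; ring⟩
      · refine ⟨hNR2, hsp.of_dvd hQne ?_⟩
        exact ⟨C (-β) * Q φ (j'+1) (1+u), by rw [hfact]; ring⟩

/-- `T ℓ x` : `x` admits a chain of iterated square roots of depth `⌊ℓ/2⌋ + 1`. -/
def T : ℕ → L → Prop
  | 0, x => ∃ y : L, y^2 = x
  | 1, x => ∃ y : L, y^2 = x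
  | (ℓ+2), x => ∃ y : L, y^2 = x ∧ T ℓ y

lemma T_intro : ∀ (ℓ : ℕ) (x y : L), y^2 = x → (∀ ℓ', ℓ = ℓ'+2 → T ℓ' y) → T ℓ x
  | 0, _, y, h, _ => ⟨y, h⟩
  | 1, _, y, h, _ => ⟨y, h⟩
  | (ℓ+2), _, y, h, h2 => ⟨y, h, h2 ℓ rfl⟩

lemma T_out : ∀ (ℓ : ℕ) (x : L), T ℓ x → ∃ y : L, y^2 = x ∧ (∀ ℓ', ℓ = ℓ'+2 → T ℓ' y)
  | 0, _, ⟨y, h⟩ => ⟨y, h, fun _ h' => absurd h' (by omega)⟩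
  | 1, _, ⟨y, h⟩ => ⟨y, h, fun _ h' => absurd h' (by omega)⟩
  | (ℓ+2), _, ⟨y, h, h2⟩ => ⟨y, h, fun ℓ' h' => by
      obtain rfl : ℓ' = ℓ := by omega
      exact h2⟩

lemma T_mul : ∀ (ℓ : ℕ) (x y : L), T ℓ x → T ℓ y → T ℓ (x*y)
  | 0, _, _, ⟨a, ha⟩, ⟨b, hb⟩ => ⟨a*b, by rw [mul_pow, ha, hb]⟩
  | 1, _, _, ⟨a, ha⟩, ⟨b, hb⟩ => ⟨a*b, by rw [mul_pow, ha, hb]⟩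
  | (ℓ+2), _, _, ⟨a, ha, ha'⟩, ⟨b, hb, hb'⟩ =>
      ⟨a*b, by rw [mul_pow, ha, hb], T_mul ℓ a b ha' hb'⟩

lemma T_inv : ∀ (ℓ : ℕ) (x : L), T ℓ x → T ℓ x⁻¹
  | 0, _, ⟨a, ha⟩ => ⟨a⁻¹, by rw [inv_pow, ha]⟩
  | 1, _, ⟨a, ha⟩ => ⟨a⁻¹, by rw [inv_pow, ha]⟩
  | (ℓ+2), _, ⟨a, ha, ha'⟩ => ⟨a⁻¹, by rw [inv_pow, ha], T_inv ℓ a ha'⟩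

lemma T_mono : ∀ (ℓ ℓ' : ℕ) (x : L), ℓ' ≤ ℓ → T ℓ x → T ℓ' x := by
  intro ℓ
  induction ℓ using Nat.strong_induction_on with
  | _ ℓ IH =>
    intro ℓ' x hle ht
    obtain ⟨y, hy, hrec⟩ := T_out ℓ x ht
    refine T_intro ℓ' x y hy ?_
    rintro a rfl
    obtain ⟨b, rfl⟩ : ∃ b, ℓ = b + 2 := ⟨ℓ - 2, by omega⟩
    exact IH b (by omega) a y (by omega) (hrec b rfl)

lemma sq_cases {u u₀ β : L} (hβ0 : β ≠ 0) (hu : u^2 * β = 1) (hu₀ : u₀^2 * β = 1) :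
    u = u₀ ∨ u = -u₀ := by
  have hsq : u^2 = u₀^2 := mul_right_cancel₀ hβ0 (hu.trans hu₀.symm)
  rcases mul_eq_zero.mp (show (u - u₀)*(u + u₀) = 0 by linear_combination hsq) with h | h
  · exact Or.inl (by linear_combination h)
  · exact Or.inr (by linear_combination h)

lemma w_rel {u u₁ v v' : L} (h1 : u₁^2*(1+u) = 1) (h2 : v^2*(1+u₁) = 1)
    (h3 : v'^2*(1-u₁) = 1) : (u₁*v*v')^2 * u = 1 := by
  have e2 : v^2*v'^2*(1-u₁^2) = 1 := by linear_combination (v'^2*(1-u₁)) * h2 + h3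
  have e1 : 1 - u₁^2 = u₁^2*u := by linear_combination -h1
  linear_combination e2 - (v^2*v'^2) * e1

lemma w_rel' {u u₂ s s' : L} (h1 : u₂^2*(1-u) = 1) (h2 : s^2*(1+u₂) = 1)
    (h3 : s'^2*(1-u₂) = 1) : (u₂*s*s')^2 * (-u) = 1 := by
  have e2 : s^2*s'^2*(1-u₂^2) = 1 := by linear_combination (s'^2*(1-u₂)) * h2 + h3
  have e1 : 1 - u₂^2 = -(u₂^2*u) := by linear_combination -h1
  linear_combination e2 - (s^2*s'^2) * e1

lemma keyP (φ : k →+* L) : ∀ (j : ℕ) (β u : L), Nd φ (j+3) β → u^2 * β = 1 → T j u⁻¹ := by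
  intro j
  induction j using Nat.strong_induction_on with
  | _ j IH =>
    intro β u hN hu
    obtain ⟨u₀, hu₀, hch⟩ := step φ (j+2) hN
    obtain ⟨hc1, hc2⟩ := hch (by omega)
    have hβ0 : β ≠ 0 := hN.1.ne_zero
    have hcc : Nd φ (j+2) (1+u) ∧ Nd φ (j+2) (1-u) := by
      rcases sq_cases hβ0 hu hu₀ with rfl | rfl
      · exact ⟨hc1, hc2⟩
      · constructor
        · have : (1 : L) + -u₀ = 1 - u₀ := by ring
          rw [this]; exact hc2
        · have : (1 : L) - -u₀ = 1 + u₀ := by ring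
          rw [this]; exact hc1
    obtain ⟨hcA, hcB⟩ := hcc
    obtain ⟨u₁, hu₁, hch1⟩ := step φ (j+1) hcA
    obtain ⟨hd1, hd2⟩ := hch1 (by omega)
    obtain ⟨v, hv, _⟩ := step φ j hd1
    obtain ⟨v', hv', _⟩ := step φ j hd2
    have hw : (u₁*v*v')^2 * u = 1 := w_rel hu₁ hv hv'
    refine T_intro j _ (u₁*v*v') (eq_inv_of_mul_eq_one_left hw) ?_
    rintro ℓ rfl
    have t1 : T (ℓ+1) u₁⁻¹ := IH (ℓ+1) (by omega) (1+u) u₁ hcA hu₁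
    have t1' : T ℓ u₁ := T_mono (ℓ+1) ℓ _ (by omega) (by simpa using T_inv (ℓ+1) _ t1)
    have t2 : T ℓ v := by simpa using T_inv ℓ _ (IH ℓ (by omega) (1+u₁) v hd1 hv)
    have t3 : T ℓ v' := by simpa using T_inv ℓ _ (IH ℓ (by omega) (1-u₁) v' hd2 hv')
    exact T_mul ℓ _ _ (T_mul ℓ _ _ t1' t2) t3

lemma keyMain (φ : k →+* L) (j : ℕ) (β : L) (hN : Nd φ (j+3) β) : T j (-1 : L) := by
  obtain ⟨u, hu, hch⟩ := step φ (j+2) hN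
  obtain ⟨hcA, hcB⟩ := hch (by omega)
  have hu0 : u ≠ 0 := by
    intro h
    rw [h] at hu
    simp at hu
  -- the element `w₁` with `w₁² = 1/u`
  obtain ⟨u₁, hu₁, hch1⟩ := step φ (j+1) hcA
  obtain ⟨hd1, hd2⟩ := hch1 (by omega)
  obtain ⟨v, hv, _⟩ := step φ j hd1
  obtain ⟨v', hv', _⟩ := step φ j hd2
  have hw1 : (u₁*v*v')^2 * u = 1 := w_rel hu₁ hv hv'
  -- the element `w₂` with `w₂² = -1/u`
  obtain ⟨u₂, hu₂, hch2⟩ := step φ (j+1) hcB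
  obtain ⟨he1, he2⟩ := hch2 (by omega)
  obtain ⟨s, hs, _⟩ := step φ j he1
  obtain ⟨s', hs', _⟩ := step φ j he2
  have hw2 : (u₂*s*s')^2 * (-u) = 1 := w_rel' hu₂ hs hs'
  have hz : ((u₂*s*s') * (u₁*v*v')⁻¹)^2 = -1 := by
    have hw1' : ((u₁*v*v'))^2 = u⁻¹ := eq_inv_of_mul_eq_one_left hw1
    have hw2' : ((u₂*s*s'))^2 = (-u)⁻¹ := eq_inv_of_mul_eq_one_left hw2
    rw [mul_pow, inv_pow, hw1', hw2', inv_inv, inv_neg]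
    field_simp
  refine T_intro j _ _ hz ?_
  rintro ℓ rfl
  have tw1 : T ℓ (u₁*v*v') := by
    have t1 : T (ℓ+1) u₁⁻¹ := keyP φ (ℓ+1) (1+u) u₁ hcA hu₁
    have t1' : T ℓ u₁ := T_mono (ℓ+1) ℓ _ (by omega) (by simpa using T_inv (ℓ+1) _ t1)
    have t2 : T ℓ v := by simpa using T_inv ℓ _ (keyP φ ℓ (1+u₁) v hd1 hv)
    have t3 : T ℓ v' := by simpa using T_inv ℓ _ (keyP φ ℓ (1-u₁) v' hd2 hv')
    exact T_mul ℓ _ _ (T_mul ℓ _ _ t1' t2) t3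
  have tw2 : T ℓ (u₂*s*s') := by
    have t1 : T (ℓ+1) u₂⁻¹ := keyP φ (ℓ+1) (1-u) u₂ hcB hu₂
    have t1' : T ℓ u₂ := T_mono (ℓ+1) ℓ _ (by omega) (by simpa using T_inv (ℓ+1) _ t1)
    have t2 : T ℓ s := by simpa using T_inv ℓ _ (keyP φ ℓ (1+u₂) s he1 hs)
    have t3 : T ℓ s' := by simpa using T_inv ℓ _ (keyP φ ℓ (1-u₂) s' he2 hs')
    exact T_mul ℓ _ _ (T_mul ℓ _ _ t1' t2) t3
  exact T_mul ℓ _ _ tw2 (T_inv ℓ _ tw1)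

lemma T_chain : ∀ (a : ℕ) (x : L), T (2*a) x → ∃ z : L, z^(2^(a+1)) = x := by
  intro a
  induction a with
  | zero =>
    intro x h
    obtain ⟨y, hy⟩ := h
    exact ⟨y, by simpa using hy⟩
  | succ a ih =>
    intro x h
    have h' : T (2*a+2) x := by rwa [show 2*(a+1) = 2*a+2 by ring] at h
    obtain ⟨y, hy, hT⟩ := h'
    obtain ⟨z, hz⟩ := ih y hT
    refine ⟨z, ?_⟩
    rw [show a+1+1 = (a+1)+1 from rfl, pow_succ, pow_mul, hz, hy]

lemma prim_of_pow {M : Type*} [Field M] [CharZero M] (z : M) (a : ℕ)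
    (hz : z^(2^(a+1)) = -1) : IsPrimitiveRoot z (2^(a+2)) := by
  have h1 : z^(2^(a+2)) = 1 := by
    rw [show a+2 = (a+1)+1 from rfl, pow_succ, pow_mul, hz]
    ring
  have hord : orderOf z ∣ 2^(a+2) := orderOf_dvd_of_pow_eq_one h1
  obtain ⟨i, hi, hd⟩ := (Nat.dvd_prime_pow Nat.prime_two).mp hord
  have hia : i = a+2 := by
    by_contra hne
    have hdvd : orderOf z ∣ 2^(a+1) := by
      rw [hd]
      exact pow_dvd_pow 2 (by omega)
    have h2 : z^(2^(a+1)) = 1 := orderOf_dvd_iff_pow_eq_one.mp hdvd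
    rw [hz] at h2
    exact (by norm_num : (-1 : M) ≠ 1) h2
  have hd' : orderOf z = 2^(a+2) := by rw [hd, hia]
  exact ⟨h1, fun l hl => hd' ▸ orderOf_dvd_of_pow_eq_one hl⟩

lemma neg_one_prim {M : Type*} [Field M] [CharZero M] : IsPrimitiveRoot (-1 : M) 2 := by
  refine ⟨by ring, fun l hl => ?_⟩
  rcases Nat.even_or_odd l with he | ho
  · exact he.two_dvd
  · rw [ho.neg_one_pow] at hl
    exact absurd hl (by norm_num)

end St19

open St19 in
/-- For `f(x) = 1/(x-1)²` over a field `k` of characteristic zero,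
the field `K_∞ = ⋃ₙ Kₙ` (where `Kₙ` is the splitting field of `fⁿ(x) - t` over
`K = k(t)`) contains a primitive `2^m`-th root of unity for every `m ≥ 1`;
moreover `ζ_{2^m} ∈ K_{2m-1}`. -/
theorem roots_of_unity_in_Kinfty (k : Type) [Field k] [CharZero k] :
    (∀ m : ℕ, 1 ≤ m → ∃ n : ℕ, ∃ ζ : (P k n).SplittingField, IsPrimitiveRoot ζ (2 ^ m)) ∧
    (∀ m : ℕ, 1 ≤ m → ∃ ζ : (P k (2 * m - 1)).SplittingField, IsPrimitiveRoot ζ (2 ^ m)) := by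
  have key : ∀ m : ℕ, 1 ≤ m →
      ∃ ζ : (P k (2 * m - 1)).SplittingField, IsPrimitiveRoot ζ (2 ^ m) := by
    intro m hm
    set L := (P k (2 * m - 1)).SplittingField with hL
    set φ : k →+* L := (algebraMap (RatFunc k) L).comp (RatFunc.C : k →+* RatFunc k) with hφ
    haveI hcz : CharZero L := by
      refine ⟨fun a b h => ?_⟩
      have h2 : φ ((a : ℕ) : k) = φ ((b : ℕ) : k) := by
        rw [map_natCast φ, map_natCast φ]
        exact h
      exact Nat.cast_injective (φ.injective h2)
    set t : L := algebraMap (RatFunc k) L RatFunc.X with ht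
    have hNR : NR φ t := by
      intro a ha
      have h1 : RatFunc.C a = RatFunc.X := (algebraMap (RatFunc k) L).injective ha
      have h2 := congrArg RatFunc.num h1
      rw [RatFunc.num_C, RatFunc.num_X] at h2
      exact (Polynomial.X_ne_C a) h2.symm
    have hmap : (P k (2 * m - 1)).map (algebraMap (RatFunc k) L) = Q φ (2 * m - 1) t := by
      simp only [P, Q, Polynomial.map_sub, Polynomial.map_mul, Polynomial.map_map, map_C, hφ, ht]
    have hsp : (Q φ (2 * m - 1) t).Splits := by
      rw [← hmap]
      exact SplittingField.splits _
    have hNd : Nd φ (2 * m - 1) t := ⟨hNR, hsp⟩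
    rcases Nat.lt_or_ge m 2 with h2m | h2m
    · obtain rfl : m = 1 := by omega
      exact ⟨-1, by simpa using (neg_one_prim (M := L))⟩
    · obtain ⟨m', rfl⟩ : ∃ m', m = m' + 2 := ⟨m - 2, by omega⟩
      have hNd' : Nd φ (2 * m' + 3) t :=
        (congrArg (fun a : ℕ => Nd φ a t) (show 2 * (m' + 2) - 1 = 2 * m' + 3 by omega)) ▸ hNd
      have hT : T (2 * m') (-1 : L) := keyMain φ (2 * m') t hNd'
      obtain ⟨z, hz⟩ := T_chain m' (-1 : L) hT
      exact ⟨z, by simpa using prim_of_pow z m' hz⟩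
  exact ⟨fun m hm => ⟨2 * m - 1, key m hm⟩, key⟩
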